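/- Let n ≥ 2 and let M be a swap Kripke pre-model for C_nᴰ. Then for all formulas α, β over Σ₁ᴰ and every world w: (1) if v^n_w(O(α → β)) ∈ D_n and v^n_w(Oα) ∈ D_n then v^n_w(Oβ) ∈ D_n; (2) if moreover the valuations of M satisfy the restrictions (i) v^n_w(α) = t^n_0 implies v^n_w(α ∧ ¬α) = T_n and (ii) for 1 ≤ k ≤ n−1, v^n_w(α) = t^n_k implies v^n_w(α ∧ ¬α) ∈ I_n and v^n_w(α¹) = t^n_{k−1}, then v^n_w(Oα) ∈ D_n implies v^n_w(∼^{(n)} O ∼^{(n)} α) ∈ D_n. -/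

import Mathlib

/-- Formulas over the signature Σ₁ᴰ = {∧, ∨, →, ¬, O}, with countably many
propositional variables. -/
inductive Form : Type
  | var : ℕ → Form
  | and : Form → Form → Form
  | or : Form → Form → Form
  | imp : Form → Form → Form
  | neg : Form → Form
  | obl : Form → Form

namespace Form

/-- α⁰ = α, α^{k+1} = ¬(α^k ∧ ¬α^k). -/
def pow (α : Form) : ℕ → Form
  | 0 => α
  | k + 1 => ((α.pow k).and (α.pow k).neg).neg

/-- α^{(n)} = α¹ ∧ … ∧ αⁿ (for n ≥ 1). -/
def bigPow (α : Form) : ℕ → Form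
  | 0 => α.pow 1
  | 1 => α.pow 1
  | m + 2 => (α.bigPow (m + 1)).and (α.pow (m + 2))

/-- ∼^{(n)}α := ¬α ∧ α^{(n)}. -/
def snn (n : ℕ) (α : Form) : Form := α.neg.and (α.bigPow n)

end Form

/-- The n+2 snapshots of the swap structure for C_nᴰ: T_n, t^n_0, …, t^n_{n-1}, F_n. -/
inductive SVn (n : ℕ) : Type
  | T : SVn n
  | t : Fin n → SVn n
  | F : SVn n
deriving DecidableEq

namespace SVn

/-- The coordinates of a snapshot, as an element of 2^{n+1} (0-indexed):
T_n = (1,0,1,…,1), t^n_i has its unique 0 at (0-indexed) position i+2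
(so t^n_{n-1} = (1,…,1)), and F_n = (0,1,…,1). -/
def coord {n : ℕ} : SVn n → Fin (n + 1) → Bool
  | .T, j => decide (j.val ≠ 1)
  | .t i, j => decide (j.val ≠ i.val + 2)
  | .F, j => decide (j.val ≠ 0)

/-- First coordinate z₁. -/
def p1 {n : ℕ} (z : SVn n) : Bool := z.coord 0

/-- Second coordinate z₂. -/
def p2 {n : ℕ} (z : SVn n) : Bool := z.coord 1

/-- Designated values D_n = A_n ∖ {F_n}, i.e. first coordinate 1. -/
def desig {n : ℕ} (z : SVn n) : Prop := z.p1 = true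

/-- Boolean values Boo_n = {T_n, F_n}. -/
def boo {n : ℕ} (z : SVn n) : Prop := z = SVn.T ∨ z = SVn.F

/-- Inconsistent values I_n = A_n ∖ Boo_n. -/
def incons {n : ℕ} (z : SVn n) : Prop := ∃ i : Fin n, z = SVn.t i

end SVn

/-- Boolean implication a ⊃ b. -/
def boolImp (a b : Bool) : Bool := !a || b

/-- Membership of c in a #̃ b for a binary connective # with Boolean counterpart
`op`: c₁ = a₁ op b₁, and moreover c ∈ Boo_n whenever a, b ∈ Boo_n. -/
def opCond {n : ℕ} (op : Bool → Bool → Bool) (c a b : SVn n) : Prop :=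
  c.p1 = op a.p1 b.p1 ∧ (a.boo → b.boo → c.boo)

/-- Swap Kripke pre-model conditions for C_nᴰ on a serial frame (W,R) with
valuations v_w : Form → A_n. -/
structure IsPreModelCnD (n : ℕ) {W : Type} (R : W → W → Prop)
    (v : W → Form → SVn n) : Prop where
  serial : ∀ w, ∃ w', R w w'
  and_ : ∀ w α β, opCond (· && ·) (v w (α.and β)) (v w α) (v w β)
  or_ : ∀ w α β, opCond (· || ·) (v w (α.or β)) (v w α) (v w β)
  imp_ : ∀ w α β, opCond boolImp (v w (α.imp β)) (v w α) (v w β)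
  neg_ : ∀ w α, (v w α.neg).p1 = (v w α).p2 ∧ (v w α.neg).p2 ≤ (v w α).p1
  obl_ : ∀ w α, ((v w α.obl).p1 = true ↔ ∀ w', R w w' → (v w' α).p1 = true)

/-- The RNmatrix restrictions on valuations:
(i) v_w(α) = t^n_0 implies v_w(α ∧ ¬α) = T_n;
(ii) for 1 ≤ k ≤ n−1, v_w(α) = t^n_k implies v_w(α ∧ ¬α) ∈ I_n and
v_w(α¹) = t^n_{k−1}. -/
def RestrCnD (n : ℕ) {W : Type} (v : W → Form → SVn n) : Prop :=
  (∀ (w : W) (α : Form) (h0 : 0 < n),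
      v w α = SVn.t ⟨0, h0⟩ → v w (α.and α.neg) = SVn.T) ∧
  (∀ (w : W) (α : Form) (k : ℕ) (hk : k < n), 1 ≤ k → v w α = SVn.t ⟨k, hk⟩ →
      (v w (α.and α.neg)).incons ∧ v w (α.pow 1) = SVn.t ⟨k - 1, by omega⟩)

/-- A swap Kripke model for C_nᴰ: a pre-model satisfying the restrictions (i), (ii)
and (iii): v_w(α) ∈ Boo_n implies v_w(Oα) ∈ Boo_n. -/
structure IsModelCnD (n : ℕ) {W : Type} (R : W → W → Prop)
    (v : W → Form → SVn n) : Prop where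
  pre : IsPreModelCnD n R v
  restr : RestrCnD n v
  booObl : ∀ w α, (v w α).boo → (v w α.obl).boo

section Aux

variable {n : ℕ} {W : Type} {R : W → W → Prop} {v : W → Form → SVn n}

lemma SVn.p1_eq_false_iff (z : SVn n) : z.p1 = false ↔ z = SVn.F := by
  cases z <;> simp [SVn.p1, SVn.coord]

lemma SVn.fin_val_one (hn : 1 ≤ n) : ((1 : Fin (n + 1)) : ℕ) = 1 := by
  rw [Fin.val_one']; exact Nat.mod_eq_of_lt (by omega)

lemma SVn.p2_eq_false_iff (hn : 1 ≤ n) (z : SVn n) : z.p2 = false ↔ z = SVn.T := by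
  have h1 := SVn.fin_val_one hn
  cases z <;> simp only [SVn.p2, SVn.coord, h1] <;> simp

lemma SVn.p1_T : (SVn.T : SVn n).p1 = true := by simp [SVn.p1, SVn.coord]
lemma SVn.p2_T (hn : 1 ≤ n) : (SVn.T : SVn n).p2 = false := by
  simp only [SVn.p2, SVn.coord, SVn.fin_val_one hn]; simp
lemma SVn.p1_F : (SVn.F : SVn n).p1 = false := by simp [SVn.p1, SVn.coord]
lemma SVn.p2_F (hn : 1 ≤ n) : (SVn.F : SVn n).p2 = true := by
  simp only [SVn.p2, SVn.coord, SVn.fin_val_one hn]; simp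
lemma SVn.p1_t (i : Fin n) : (SVn.t i).p1 = true := by simp [SVn.p1, SVn.coord]
lemma SVn.p2_t (hn : 1 ≤ n) (i : Fin n) : (SVn.t i).p2 = true := by
  simp only [SVn.p2, SVn.coord, SVn.fin_val_one hn]; simp

/-- p1 of a conjunction is the conjunction of p1's. -/
lemma and_p1 (hM : IsPreModelCnD n R v) (w : W) (α β : Form) :
    (v w (α.and β)).p1 = ((v w α).p1 && (v w β).p1) := (hM.and_ w α β).1

/-- If v w β is Boolean (T or F) then v w (β¹) = T. -/
lemma pow_one_T (hn : 1 ≤ n) (hM : IsPreModelCnD n R v) (w : W) (β : Form)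
    (hb : v w β = SVn.T ∨ v w β = SVn.F) : v w (β.pow 1) = SVn.T := by
  have hand : (v w (β.and β.neg)).p1 = ((v w β).p1 && (v w β.neg).p1) :=
    (hM.and_ w β β.neg).1
  have hneg := hM.neg_ w β
  have hF : v w (β.and β.neg) = SVn.F := by
    rw [← SVn.p1_eq_false_iff, hand, hneg.1]
    rcases hb with h | h <;> rw [h] <;> simp [SVn.p1_T, SVn.p2_T hn, SVn.p1_F]
  have hneg2 := hM.neg_ w (β.and β.neg)
  rw [hF] at hneg2
  have h2 : (v w (β.pow 1)).p2 = false := by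
    have h := hneg2.2
    rw [SVn.p1_F] at h
    exact le_antisymm (by simpa [Form.pow] using h) (Bool.false_le _)
  rw [← SVn.p2_eq_false_iff hn]; exact h2

/-- β^{k+1} = (β¹)^k as formulas. -/
lemma pow_one_comp (β : Form) (k : ℕ) : β.pow (k + 1) = (β.pow 1).pow k := by
  induction k with
  | zero => rfl
  | succ k ih => show ((β.pow (k+1)).and (β.pow (k+1)).neg).neg = _
                 rw [ih]; rfl

/-- If v w β = F then v w (β^j) = T for all j ≥ 1. -/
lemma pow_T_of_F (hn : 1 ≤ n) (hM : IsPreModelCnD n R v) (w : W) (β : Form)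
    (hb : v w β = SVn.F) (j : ℕ) (hj : 1 ≤ j) : v w (β.pow j) = SVn.T := by
  induction j with
  | zero => omega
  | succ j ih =>
    rcases Nat.eq_zero_or_pos j with h0 | h1
    · subst h0; exact pow_one_T hn hM w β (Or.inr hb)
    · have hT := ih h1
      exact pow_one_T hn hM w (β.pow j) (Or.inl hT)

/-- Under the restrictions, if v w α = t_k then v w (α^{k+1}) = F. -/
lemma pow_F_of_t (hn : 1 ≤ n) (hM : IsPreModelCnD n R v) (hr : RestrCnD n v) (w : W)
    (k : ℕ) (hk : k < n) : ∀ (α : Form), v w α = SVn.t ⟨k, hk⟩ →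
    v w (α.pow (k + 1)) = SVn.F := by
  induction k with
  | zero =>
    intro α hα
    have hT : v w (α.and α.neg) = SVn.T := hr.1 w α hk hα
    have hneg := hM.neg_ w (α.and α.neg)
    rw [hT] at hneg
    have : (v w (α.pow 1)).p1 = false := by
      have := hneg.1; rw [SVn.p2_T hn] at this
      simpa [Form.pow] using this
    rwa [SVn.p1_eq_false_iff] at this
  | succ k ih =>
    intro α hα
    have h2 := (hr.2 w α (k + 1) hk (by omega) hα).2
    have hk' : k < n := by omega
    have hpow1 : v w (α.pow 1) = SVn.t ⟨k, hk'⟩ := by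
      convert h2 using 3
      omega
    have := ih hk' (α.pow 1) hpow1
    rwa [← pow_one_comp] at this

/-- If all α^j (1 ≤ j ≤ m) have p1 true, so does α^{(m)}. -/
lemma bigPow_p1_true (hM : IsPreModelCnD n R v) (w : W) (α : Form) (m : ℕ)
    (h : ∀ j, 1 ≤ j → j ≤ max m 1 → (v w (α.pow j)).p1 = true) :
    (v w (α.bigPow m)).p1 = true := by
  induction m with
  | zero => exact h 1 le_rfl (by omega)
  | succ m ih =>
    match m, ih with
    | 0, _ => exact h 1 le_rfl (by omega)
    | m + 1, ih =>
      have h1 : (v w (α.bigPow (m + 1))).p1 = true :=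
        ih (fun j hj1 hj2 => h j hj1 (by omega))
      have h2 : (v w (α.pow (m + 2))).p1 = true := h (m + 2) (by omega) (by omega)
      show (v w ((α.bigPow (m + 1)).and (α.pow (m + 2)))).p1 = true
      rw [and_p1 hM, h1, h2]; rfl

/-- If some α^j (1 ≤ j ≤ m) has p1 false, so does α^{(m)}. -/
lemma bigPow_p1_false (hM : IsPreModelCnD n R v) (w : W) (α : Form) (m : ℕ)
    (j : ℕ) (hj1 : 1 ≤ j) (hj2 : j ≤ max m 1) (h : (v w (α.pow j)).p1 = false) :
    (v w (α.bigPow m)).p1 = false := by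
  induction m with
  | zero =>
    have : j = 1 := by omega
    subst this; exact h
  | succ m ih =>
    match m, ih with
    | 0, _ =>
      have : j = 1 := by omega
      subst this; exact h
    | m + 1, ih =>
      show (v w ((α.bigPow (m + 1)).and (α.pow (m + 2)))).p1 = false
      rw [and_p1 hM]
      rcases Nat.lt_or_ge j (m + 2) with hlt | hge
      · rw [ih (by omega)]; rfl
      · have : j = m + 2 := by omega
        subst this; rw [h]; simp

end Aux

/-- In any swap Kripke pre-model for C_nᴰ (n ≥ 2): (1) the (O-K) axiom behaves
soundly; (2) under the restrictions (i), (ii), the (D_n) axiom behaves soundly. -/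
theorem CnD_modal_axioms (n : ℕ) (hn : 2 ≤ n) {W : Type} (R : W → W → Prop)
    (v : W → Form → SVn n) (hM : IsPreModelCnD n R v) :
    (∀ (w : W) (α β : Form),
        (v w (α.imp β).obl).desig → (v w α.obl).desig → (v w β.obl).desig) ∧
    (RestrCnD n v → ∀ (w : W) (α : Form),
        (v w α.obl).desig → (v w (Form.snn n ((Form.snn n α).obl))).desig) := by
  constructor
  · -- (O-K)
    intro w α β h1 h2
    unfold SVn.desig at *
    rw [hM.obl_ w β]
    intro w' hw'
    have hαβ : (v w' (α.imp β)).p1 = true := (hM.obl_ w (α.imp β)).1 h1 w' hw'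
    have hα : (v w' α).p1 = true := (hM.obl_ w α).1 h2 w' hw'
    have himp := (hM.imp_ w' α β).1
    rw [hαβ, hα] at himp
    cases hβ : (v w' β).p1 with
    | true => rfl
    | false => rw [hβ] at himp; simp [boolImp] at himp
  · -- (D_n)
    intro hr w α hO
    unfold SVn.desig at *
    -- Step 1: at every successor, the snn of α is F
    have hsucc : ∀ w', R w w' → v w' (Form.snn n α) = SVn.F := by
      intro w' hw'
      have hα : (v w' α).p1 = true := (hM.obl_ w α).1 hO w' hw'
      rw [← SVn.p1_eq_false_iff]
      show (v w' ((α.neg).and (α.bigPow n))).p1 = false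
      rw [and_p1 hM]
      cases hv : v w' α with
      | T =>
        have hneg := (hM.neg_ w' α).1
        rw [hv, SVn.p2_T (by omega)] at hneg
        rw [hneg]; rfl
      | F => rw [hv, SVn.p1_F] at hα; exact absurd hα (by simp)
      | t i =>
        have hF : v w' (α.pow (i.val + 1)) = SVn.F :=
          pow_F_of_t (by omega) hM hr w' i.val i.isLt α (by rw [hv])
        have hbig : (v w' (α.bigPow n)).p1 = false :=
          bigPow_p1_false hM w' α n (i.val + 1) (by omega)
            (by have := i.isLt; omega) (by rw [hF]; exact SVn.p1_F)
        rw [hbig]; simp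
    -- Step 2: v w (O (snn n α)) = F
    obtain ⟨w0, hw0⟩ := hM.serial w
    set γ : Form := (Form.snn n α).obl with hγ
    have hγF : v w γ = SVn.F := by
      rw [← SVn.p1_eq_false_iff]
      cases hp : (v w γ).p1 with
      | false => rfl
      | true =>
        exfalso
        have := (hM.obl_ w (Form.snn n α)).1 hp w0 hw0
        rw [hsucc w0 hw0, SVn.p1_F] at this
        exact absurd this (by simp)
    -- Step 3: the snn of γ is designated
    show (v w ((γ.neg).and (γ.bigPow n))).p1 = true
    rw [and_p1 hM]
    have hneg : (v w γ.neg).p1 = true := by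
      have := (hM.neg_ w γ).1
      rw [hγF, SVn.p2_F (by omega)] at this
      exact this
    have hbig : (v w (γ.bigPow n)).p1 = true := by
      refine bigPow_p1_true hM w γ n (fun j hj1 _ => ?_)
      rw [pow_T_of_F (by omega) hM w γ hγF j hj1]
      exact SVn.p1_T
    rw [hneg, hbig]; rfl
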